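/- arXiv:0812.3499 — 10 statements merged into one kernel-verified Lean document; each statement's English description precedes it below -/
import Mathlib

section
/- Let L be a complete lattice. The map sending a closure operator f on L to the partial identity relation on its image, 1_{Im f} = {(ℓ,ℓ) : ℓf = ℓ}, is an order-embedding of the lattice of closure operators on L into the monoid of meet-closed binary relations on L, sending the identity closure operator to the diagonal relation, and satisfying 1_{Im f} ∘ 1_{Im g} = 1_{Im (f ∨ g)}. In particular the image of this map is an idempotent commutative submonoid. -/
/-- Closure operators on a complete lattice, ordered pointwise. -/
noncomputable instance closureOperatorOrder (α : Type*) [CompleteLattice α] :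
    PartialOrder (ClosureOperator α) :=
  PartialOrder.lift (fun c => (c : α → α)) DFunLike.coe_injective

/-- Relational composition of binary relations on `α`. -/
def relComp {α : Type*} (f g : Set (α × α)) : Set (α × α) :=
  {p | ∃ z, (p.1, z) ∈ f ∧ (z, p.2) ∈ g}

/-- The diagonal relation on `α`. -/
def relDiag (α : Type*) : Set (α × α) := {p | p.1 = p.2}

/-- The partial identity relation on the image (= set of fixed points) of a
closure operator `f` on `α`:  `1_{Im f} = {(ℓ, ℓ) : ℓ f = ℓ}`. -/
def partialId {α : Type*} [CompleteLattice α] (f : ClosureOperator α) : Set (α × α) :=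
  {p | p.1 = p.2 ∧ f p.1 = p.1}

lemma mem_partialId {α : Type*} [CompleteLattice α] (f : ClosureOperator α) (x y : α) :
    (x, y) ∈ partialId f ↔ x = y ∧ f x = x := Iff.rfl

lemma le_iff_fix {α : Type*} [CompleteLattice α] (f g : ClosureOperator α) :
    f ≤ g ↔ ∀ x, g x = x → f x = x := by
  constructor
  · intro h x hx
    have h1 : f x ≤ g x := h x
    rw [hx] at h1
    exact le_antisymm h1 (f.le_closure x)
  · intro h x
    have : f (g x) = g x := h _ (g.idempotent x)
    show f x ≤ g x
    calc f x ≤ f (g x) := f.monotone (g.le_closure x)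
    _ = g x := this

/-- The map `f ↦ 1_{Im f}` is an order-embedding of the lattice of closure
operators on `L` into the monoid of meet-closed binary relations on `L`
(ordered by reverse inclusion), sending the identity closure operator to
the diagonal relation and satisfying `1_{Im f} ∘ 1_{Im g} = 1_{Im (f ∨ g)}`;
in particular its image is an idempotent, commutative submonoid. -/
theorem partialId_embedding (α : Type*) [CompleteLattice α] :
    (∀ f g : ClosureOperator α, f ≤ g ↔ partialId g ⊆ partialId f) ∧
    (partialId (ClosureOperator.id α) = relDiag α) ∧
    (∀ f g h : ClosureOperator α, IsLUB {f, g} h →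
      relComp (partialId f) (partialId g) = partialId h) ∧
    (∀ f : ClosureOperator α, relComp (partialId f) (partialId f) = partialId f) ∧
    (∀ f g : ClosureOperator α,
      relComp (partialId f) (partialId g) = relComp (partialId g) (partialId f)) := by
  have hle : ∀ f g : ClosureOperator α, f ≤ g ↔ partialId g ⊆ partialId f := by
    intro f g
    rw [le_iff_fix]
    constructor
    · rintro h ⟨x, y⟩ hxy
      rw [mem_partialId] at hxy ⊢
      exact ⟨hxy.1, h _ hxy.2⟩
    · intro h x hx
      exact ((mem_partialId f x x).1 (h ((mem_partialId g x x).2 ⟨rfl, hx⟩))).2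
  have hcomp : ∀ f g : ClosureOperator α, relComp (partialId f) (partialId g) =
      {p : α × α | p.1 = p.2 ∧ f p.1 = p.1 ∧ g p.1 = p.1} := by
    intro f g
    ext ⟨x, y⟩
    simp only [relComp, mem_partialId, Set.mem_setOf_eq]
    constructor
    · rintro ⟨z, ⟨rfl, hf⟩, ⟨rfl, hg⟩⟩
      exact ⟨rfl, hf, hg⟩
    · rintro ⟨rfl, hf, hg⟩
      exact ⟨x, ⟨rfl, hf⟩, ⟨rfl, hg⟩⟩
  refine ⟨hle, ?_, ?_, ?_, ?_⟩
  · ext ⟨x, y⟩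
    simp only [mem_partialId, relDiag, Set.mem_setOf_eq]
    exact ⟨fun h => h.1, fun h => ⟨h, rfl⟩⟩
  · intro f g h hlub
    set k := ClosureOperator.ofCompletePred (fun x => f x = x ∧ g x = x)
      (fun s hs => ⟨(ClosureOperator.sInf_isClosed (c := f) (S := s)
          fun x hx => f.isClosed_iff.2 (hs x hx).1).closure_eq,
        (ClosureOperator.sInf_isClosed (c := g) (S := s)
          fun x hx => g.isClosed_iff.2 (hs x hx).2).closure_eq⟩) with hk
    have hkfix : ∀ x, k x = x ↔ (f x = x ∧ g x = x) := by
      intro x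
      constructor
      · intro hx
        have : k.IsClosed x := k.isClosed_iff.2 hx
        exact this
      · intro hx
        exact k.isClosed_iff.1 (by exact hx)
    have hfk : f ≤ k := (le_iff_fix f k).2 fun x hx => ((hkfix x).1 hx).1
    have hgk : g ≤ k := (le_iff_fix g k).2 fun x hx => ((hkfix x).1 hx).2
    have hhk : h ≤ k := hlub.2 (by rintro c (rfl | rfl) <;> [exact hfk; exact hgk])
    have hfh : f ≤ h := hlub.1 (Or.inl rfl)
    have hgh : g ≤ h := hlub.1 (Or.inr rfl)
    rw [hcomp]
    ext ⟨x, y⟩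
    simp only [mem_partialId, Set.mem_setOf_eq]
    constructor
    · rintro ⟨rfl, hf, hg⟩
      exact ⟨rfl, (le_iff_fix h k).1 hhk x ((hkfix x).2 ⟨hf, hg⟩)⟩
    · rintro ⟨rfl, hx⟩
      exact ⟨rfl, (le_iff_fix f h).1 hfh x hx, (le_iff_fix g h).1 hgh x hx⟩
  · intro f
    rw [hcomp]
    ext ⟨x, y⟩
    simp only [mem_partialId, Set.mem_setOf_eq]
    exact ⟨fun ⟨h1, h2, _⟩ => ⟨h1, h2⟩, fun ⟨h1, h2⟩ => ⟨h1, h2, h2⟩⟩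
  · intro f g
    rw [hcomp, hcomp]
    ext ⟨x, y⟩
    exact ⟨fun ⟨h1, h2, h3⟩ => ⟨h1, h3, h2⟩, fun ⟨h1, h2, h3⟩ => ⟨h1, h3, h2⟩⟩
end

section
/- Let f be a closure operator on L² with associated meet-closed relation f̄, and let the back-flow operator ←f be the closure operator on L whose image is dom f̄. Then for all ℓ ∈ L, ℓ(←f) equals the first coordinate of the value of f applied to the pair (ℓ, B), where B is the bottom of L. -/
/-- Let `f` be a closure operator on `L²` with associated meet-closed relation `f̄`
(its set of fixed points), and let the back-flow operator `←f` be the closure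
operator on `L` whose image is `dom f̄`, that is,
`ℓ(←f) = ⨅ {k ∈ dom f̄ : ℓ ≤ k}`.  Then for all `ℓ ∈ L`, `ℓ(←f)` equals the first
coordinate of `f (ℓ, B)`, where `B` is the bottom of `L`. -/
theorem backflow_formula (α : Type*) [CompleteLattice α]
    (f : ClosureOperator (α × α)) (ℓ : α) :
    sInf {k : α | (∃ y, f (k, y) = (k, y)) ∧ ℓ ≤ k} = (f (ℓ, ⊥)).1 := by
  apply le_antisymm
  · apply sInf_le
    refine ⟨⟨(f (ℓ, ⊥)).2, ?_⟩, (f.le_closure (ℓ, ⊥)).1⟩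
    exact f.idempotent (ℓ, ⊥)
  · apply le_sInf
    rintro k ⟨⟨y, hy⟩, hk⟩
    have h : f (ℓ, ⊥) ≤ f (k, y) := f.monotone ⟨hk, bot_le⟩
    rw [hy] at h
    exact h.1
end

section
/- Let f, g be closure operators on L² and ℓ ∈ L. If ℓ(←f) = ℓ and (ℓ(→f))(←g) = ℓ(→f) (i.e., there is no back-flow), then ℓ(→f)(→g) = ℓ(→(fg)). -/
/-- The meet-closed relation associated to a closure operator on `α × α`:
its set of stable (fixed) pairs. -/
def fixSet {α : Type*} [CompleteLattice α] (f : ClosureOperator (α × α)) : Set (α × α) :=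
  {p | f p = p}

/-- Forward-flow: `ℓ(→f) = π_f (f (ℓ, ⊥))`. -/
def fwdFlow {α : Type*} [CompleteLattice α] (f : ClosureOperator (α × α)) (ℓ : α) : α :=
  (f (ℓ, ⊥)).2

/-- Back-flow value: `ℓ(←f) = π_b (f (ℓ, ⊥))`. -/
def bwdFlow {α : Type*} [CompleteLattice α] (f : ClosureOperator (α × α)) (ℓ : α) : α :=
  (f (ℓ, ⊥)).1

/-- If `y` is a fixed point of a closure operator `c` and `x ≤ y`, then `c x ≤ y`. -/
lemma closure_le_of_fix {α : Type*} [CompleteLattice α] (c : ClosureOperator α)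
    {x y : α} (hy : c y = y) (hxy : x ≤ y) : c x ≤ y := by
  calc c x ≤ c y := c.monotone hxy
  _ = y := hy

/-- Let `f, g` be closure operators on `L²` and `ℓ ∈ L`.  If `ℓ(←f) = ℓ` and
`(ℓ(→f))(←g) = ℓ(→f)` (no back-flow), then `ℓ(→f)(→g) = ℓ(→(fg))`, where `fg`
is the closure operator whose stable pairs are the relational composition of
those of `f` and `g`. -/
theorem fwdFlow_comp_of_no_backflow (α : Type*) [CompleteLattice α]
    (f g h : ClosureOperator (α × α)) (ℓ : α)
    (hh : fixSet h = relComp (fixSet f) (fixSet g))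
    (h₁ : bwdFlow f ℓ = ℓ)
    (h₂ : bwdFlow g (fwdFlow f ℓ) = fwdFlow f ℓ) :
    fwdFlow g (fwdFlow f ℓ) = fwdFlow h ℓ := by
  set m := fwdFlow f ℓ with hm
  set n := fwdFlow g m with hn
  -- f (ℓ, ⊥) = (ℓ, m)
  have hf : f (ℓ, ⊥) = (ℓ, m) := by
    have := h₁
    simp only [bwdFlow] at this
    exact Prod.ext this rfl
  -- g (m, ⊥) = (m, n)
  have hg : g (m, ⊥) = (m, n) := by
    have := h₂
    simp only [bwdFlow, ← hm] at this
    exact Prod.ext this rfl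
  -- (ℓ, m) is f-fixed, (m, n) is g-fixed
  have hfix_f : f (ℓ, m) = (ℓ, m) := by
    rw [← hf]; exact f.idempotent _
  have hfix_g : g (m, n) = (m, n) := by
    rw [← hg]; exact g.idempotent _
  -- hence (ℓ, n) is h-fixed
  have hln : ((ℓ, n) : α × α) ∈ fixSet h := by
    rw [hh]
    exact ⟨m, hfix_f, hfix_g⟩
  apply le_antisymm
  · -- h (ℓ, ⊥) is h-fixed, so it decomposes
    have hfixh : h (ℓ, ⊥) ∈ fixSet h := h.idempotent _
    rw [hh] at hfixh
    obtain ⟨z, hz1, hz2⟩ := hfixh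
    -- (ℓ,⊥) ≤ ((h (ℓ,⊥)).1, z) since (ℓ,⊥) ≤ h(ℓ,⊥)
    have hle : ((ℓ, ⊥) : α × α) ≤ ((h (ℓ, ⊥)).1, z) := by
      constructor
      · exact (h.le_closure (ℓ, ⊥)).1
      · exact bot_le
    have hmz : m ≤ z := by
      have := closure_le_of_fix f hz1 hle
      rw [hf] at this
      exact this.2
    have hle2 : ((m, ⊥) : α × α) ≤ (z, (h (ℓ, ⊥)).2) := ⟨hmz, bot_le⟩
    have := closure_le_of_fix g hz2 hle2
    rw [hg] at this
    exact this.2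
  · -- h (ℓ, ⊥) ≤ (ℓ, n)
    have := closure_le_of_fix h hln (Prod.mk_le_mk.mpr ⟨le_rfl, bot_le⟩)
    exact this.2
end

section
/- Let f, g be closure operators on L² where L is a complete lattice, with Kleene star g* defined as the closure operator on L (viewed as a two-variable operator via partial identities) whose image is the fixed-point set of ḡ. Then: (1) f ≤ f·(←g) ≤ fg*; (2) gᵏ ≤ ⋁_{m≥0} gᵐ ≤ g* for all k ≥ 0; (3) (g*)* = g*; (4) (f ∨ g)* = f*g* = f* ∨ g* = g*f*; (5) (fg*)* = f* ∨ g* = (f*g)*. -/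
/-- Powers of a binary relation under relational composition, with the diagonal
relation as the zeroth power (the identity of the monoid). -/
def relPow {α : Type*} (g : Set (α × α)) : ℕ → Set (α × α)
  | 0 => {p | p.1 = p.2}
  | n + 1 => relComp (relPow g n) g

/-- The Kleene star of a closure operator on `L²`, viewed on the level of its
associated meet-closed relation: the partial identity on the fixed-point set
`fix ḡ = {ℓ : (ℓ, ℓ) ∈ ḡ}`. -/
def relStar {α : Type*} (g : Set (α × α)) : Set (α × α) :=
  {p | p.1 = p.2 ∧ p ∈ g}

/-- The back-flow operator, viewed as the partial identity on `dom ḡ`. -/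
def relBack {α : Type*} (g : Set (α × α)) : Set (α × α) :=
  {p | p.1 = p.2 ∧ ∃ y, (p.1, y) ∈ g}

/-- A binary relation on a complete lattice is meet-closed if closed under
arbitrary coordinatewise meets. -/
def MeetClosedRel {α : Type*} [CompleteLattice α] (f : Set (α × α)) : Prop :=
  ∀ S : Set (α × α), S ⊆ f → sInf S ∈ f

/-- Basic properties of the Kleene star in the ordered monoid of abstract flows,
stated on the level of the associated meet-closed relations (where the order of
closure operators is reverse inclusion of relations, products are relational
compositions, and joins are intersections):
(1) `f ≤ f·(←g) ≤ f g*`;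
(2) `gᵏ ≤ ⋁_{m ≥ 0} gᵐ ≤ g*` for all `k ≥ 0`;
(3) `g ↦ g*` is a closure operator on `𝒞(L²)`, in particular `(g*)* = g*`;
(4) `(f ∨ g)* = f* g* = f* ∨ g* = g* f*`;
(5) `(f g*)* = f* ∨ g* = (f* g)*`. -/
theorem kleene_star_properties (α : Type*) [CompleteLattice α]
    (f g : Set (α × α)) (hf : MeetClosedRel f) (hg : MeetClosedRel g) :
    -- (1)
    (relComp f (relBack g) ⊆ f ∧ relComp f (relStar g) ⊆ relComp f (relBack g)) ∧
    -- (2)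
    ((∀ k : ℕ, (⋂ m : ℕ, relPow g m) ⊆ relPow g k) ∧ relStar g ⊆ ⋂ m : ℕ, relPow g m) ∧
    -- (3)
    ((∀ h h' : Set (α × α), MeetClosedRel h → MeetClosedRel h' → h' ⊆ h →
        relStar h' ⊆ relStar h) ∧
      (∀ h : Set (α × α), MeetClosedRel h → relStar h ⊆ h) ∧
      relStar (relStar g) = relStar g) ∧
    -- (4)
    (relStar (f ∩ g) = relComp (relStar f) (relStar g) ∧
      relComp (relStar f) (relStar g) = relStar f ∩ relStar g ∧
      relStar f ∩ relStar g = relComp (relStar g) (relStar f)) ∧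
    -- (5)
    (relStar (relComp f (relStar g)) = relStar f ∩ relStar g ∧
      relStar (relComp (relStar f) g) = relStar f ∩ relStar g) := by
  refine ⟨⟨?_, ?_⟩, ⟨?_, ?_⟩, ⟨?_, ?_, ?_⟩, ⟨?_, ?_, ?_⟩, ?_, ?_⟩
  · rintro ⟨x, y⟩ hp
    simp only [relComp, relBack, Set.mem_setOf_eq] at hp
    obtain ⟨z, hxz, hzy, -⟩ := hp
    exact hzy ▸ hxz
  · rintro ⟨x, y⟩ hp
    simp only [relComp, relStar, relBack, Set.mem_setOf_eq] at hp ⊢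
    obtain ⟨z, hxz, hzy, hz⟩ := hp
    exact ⟨z, hxz, hzy, y, hzy ▸ hz⟩
  · intro k
    exact Set.iInter_subset _ k
  · rintro ⟨x, y⟩ hp
    simp only [relStar, Set.mem_setOf_eq] at hp
    obtain ⟨hxy, hx⟩ := hp
    cases hxy
    simp only [Set.mem_iInter]
    intro m
    induction m with
    | zero => rfl
    | succ n ih =>
      simp only [relPow, relComp, Set.mem_setOf_eq]
      exact ⟨x, ih, hx⟩
  · intro h h' _ _ hsub p hp
    simp only [relStar, Set.mem_setOf_eq] at hp ⊢
    exact ⟨hp.1, hsub hp.2⟩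
  · intro h _ p hp
    exact hp.2
  · ext p
    simp only [relStar, Set.mem_setOf_eq]
    tauto
  · ext ⟨x, y⟩
    simp only [relStar, relComp, Set.mem_setOf_eq, Set.mem_inter_iff]
    constructor
    · rintro ⟨hxy, hxf, hxg⟩
      subst hxy
      exact ⟨x, ⟨rfl, hxf⟩, rfl, hxg⟩
    · rintro ⟨z, ⟨hxz, hxf⟩, hzy, hzg⟩
      subst hxz; subst hzy
      exact ⟨rfl, hxf, hzg⟩
  · ext ⟨x, y⟩
    simp only [relStar, relComp, Set.mem_setOf_eq, Set.mem_inter_iff]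
    constructor
    · rintro ⟨z, ⟨hxz, hxf⟩, hzy, hzg⟩
      subst hxz; subst hzy
      exact ⟨⟨rfl, hxf⟩, rfl, hzg⟩
    · rintro ⟨⟨hxy, hxf⟩, -, hxg⟩
      subst hxy
      exact ⟨x, ⟨rfl, hxf⟩, rfl, hxg⟩
  · ext ⟨x, y⟩
    simp only [relStar, relComp, Set.mem_setOf_eq, Set.mem_inter_iff]
    constructor
    · rintro ⟨⟨hxy, hxf⟩, -, hxg⟩
      subst hxy
      exact ⟨x, ⟨rfl, hxg⟩, rfl, hxf⟩
    · rintro ⟨z, ⟨hxz, hxg⟩, hzy, hzf⟩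
      subst hxz; subst hzy
      exact ⟨⟨rfl, hzf⟩, rfl, hxg⟩
  · ext ⟨x, y⟩
    simp only [relStar, relComp, Set.mem_setOf_eq, Set.mem_inter_iff]
    constructor
    · rintro ⟨hxy, z, hxzf, hzy, hzg⟩
      subst hxy; subst hzy
      exact ⟨⟨rfl, hxzf⟩, rfl, hzg⟩
    · rintro ⟨⟨hxy, hxf⟩, -, hxg⟩
      subst hxy
      exact ⟨rfl, x, hxf, rfl, hxg⟩
  · ext ⟨x, y⟩
    simp only [relStar, relComp, Set.mem_setOf_eq, Set.mem_inter_iff]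
    constructor
    · rintro ⟨hxy, z, ⟨hxz, hxf⟩, hzg⟩
      subst hxy; subst hxz
      exact ⟨⟨rfl, hxf⟩, rfl, hzg⟩
    · rintro ⟨⟨hxy, hxf⟩, -, hxg⟩
      subst hxy
      exact ⟨rfl, x, ⟨rfl, hxf⟩, hxg⟩
end

section
/- Let L be a finite lattice and g a closure operator on L². Define g^{ω+*} = g^ω g*, where g^ω is the idempotent power of g in the finite monoid of closure operators on L² and g* is the Kleene star. Then g^{ω+*} and g^{ω+*}g^ω are R-equivalent idempotents, and g^{ω+*}g^ω ≤ g^{ω+*}. -/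
lemma relComp_assoc {α : Type*} (f g h : Set (α × α)) :
    relComp (relComp f g) h = relComp f (relComp g h) := by
  ext ⟨x, y⟩
  constructor
  · rintro ⟨z, ⟨w, hw1, hw2⟩, hz⟩
    exact ⟨w, hw1, z, hw2, hz⟩
  · rintro ⟨w, hw, z, hz1, hz2⟩
    exact ⟨z, ⟨w, hw, hz1⟩, hz2⟩

lemma diag_mem_pow {α : Type*} {g : Set (α × α)} {y : α} (hy : (y, y) ∈ g) :
    ∀ n, (y, y) ∈ relPow g n := by
  intro n
  induction n with
  | zero => rfl
  | succ n ih => exact ⟨y, ih, hy⟩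

lemma MeetClosedRel.comp {α : Type*} [CompleteLattice α] {f g : Set (α × α)}
    (hf : MeetClosedRel f) (hg : MeetClosedRel g) : MeetClosedRel (relComp f g) := by
  intro S hS
  classical
  choose w hw1 hw2 using fun p (hp : p ∈ S) => hS hp
  refine ⟨sInf {q : α × α | ∃ p, ∃ hp : p ∈ S, q = (p.1, w p hp)} |>.2, ?_, ?_⟩
  · have h1 : sInf {q : α × α | ∃ p, ∃ hp : p ∈ S, q = (p.1, w p hp)} ∈ f := by
      apply hf
      rintro q ⟨p, hp, rfl⟩
      exact hw1 p hp
    have : (sInf S).1 = (sInf {q : α × α | ∃ p, ∃ hp : p ∈ S, q = (p.1, w p hp)}).1 := by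
      rw [Prod.fst_sInf, Prod.fst_sInf]
      congr 1
      ext x
      constructor
      · rintro ⟨p, hp, rfl⟩; exact ⟨(p.1, w p hp), ⟨p, hp, rfl⟩, rfl⟩
      · rintro ⟨q, ⟨p, hp, rfl⟩, rfl⟩; exact ⟨p, hp, rfl⟩
    rw [show ((sInf S).1, (sInf {q : α × α | ∃ p, ∃ hp : p ∈ S, q = (p.1, w p hp)}).2)
        = sInf {q : α × α | ∃ p, ∃ hp : p ∈ S, q = (p.1, w p hp)} from by
      rw [this]]
    exact h1
  · have h2 : sInf {q : α × α | ∃ p, ∃ hp : p ∈ S, q = (w p hp, p.2)} ∈ g := by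
      apply hg
      rintro q ⟨p, hp, rfl⟩
      exact hw2 p hp
    have e1 : (sInf {q : α × α | ∃ p, ∃ hp : p ∈ S, q = (p.1, w p hp)}).2
        = (sInf {q : α × α | ∃ p, ∃ hp : p ∈ S, q = (w p hp, p.2)}).1 := by
      rw [Prod.snd_sInf, Prod.fst_sInf]
      congr 1
      ext x
      constructor
      · rintro ⟨q, ⟨p, hp, rfl⟩, rfl⟩; exact ⟨(w p hp, p.2), ⟨p, hp, rfl⟩, rfl⟩
      · rintro ⟨q, ⟨p, hp, rfl⟩, rfl⟩; exact ⟨(p.1, w p hp), ⟨p, hp, rfl⟩, rfl⟩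
    have e2 : (sInf S).2 = (sInf {q : α × α | ∃ p, ∃ hp : p ∈ S, q = (w p hp, p.2)}).2 := by
      rw [Prod.snd_sInf, Prod.snd_sInf]
      congr 1
      ext x
      constructor
      · rintro ⟨p, hp, rfl⟩; exact ⟨(w p hp, p.2), ⟨p, hp, rfl⟩, rfl⟩
      · rintro ⟨q, ⟨p, hp, rfl⟩, rfl⟩; exact ⟨p, hp, rfl⟩
    rw [e1, e2, Prod.mk.eta]
    exact h2

lemma diag_meetClosed {α : Type*} [CompleteLattice α] :
    MeetClosedRel {p : α × α | p.1 = p.2} := by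
  intro S hS
  show (sInf S).1 = (sInf S).2
  rw [Prod.fst_sInf, Prod.snd_sInf]
  congr 1
  ext x
  constructor
  · rintro ⟨p, hp, rfl⟩; exact ⟨p, hp, (hS hp).symm⟩
  · rintro ⟨p, hp, rfl⟩; exact ⟨p, hp, hS hp⟩

lemma relPow_meetClosed {α : Type*} [CompleteLattice α] {g : Set (α × α)}
    (hg : MeetClosedRel g) (n : ℕ) : MeetClosedRel (relPow g n) := by
  induction n with
  | zero => exact diag_meetClosed
  | succ n ih => exact ih.comp hg

lemma relStar_meetClosed {α : Type*} [CompleteLattice α] {g : Set (α × α)}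
    (hg : MeetClosedRel g) : MeetClosedRel (relStar g) := by
  intro S hS
  exact ⟨diag_meetClosed S (fun p hp => (hS hp).1), hg S (fun p hp => (hS hp).2)⟩

/-- Let `L` be a finite lattice and `g` a closure operator on `L²` (given here
by its meet-closed relation), with `g^ω = g^n` the idempotent power of `g` and
`g^{ω+*} = g^ω g*`.  Then `g^{ω+*}` and `g^{ω+*} g^ω` are `R`-equivalent
idempotents of the finite monoid of closure operators on `L²` (equivalently, of
meet-closed relations), and `g^{ω+*} g^ω ≤ g^{ω+*}` (i.e., as relations,
`g^{ω+*} ⊆ g^{ω+*} g^ω`). -/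
theorem omega_star_idempotents (α : Type*) [CompleteLattice α] [Fintype α]
    (g : Set (α × α)) (hg : MeetClosedRel g)
    (n : ℕ) (hn : 0 < n) (hidem : relComp (relPow g n) (relPow g n) = relPow g n) :
    relComp (relComp (relPow g n) (relStar g)) (relComp (relPow g n) (relStar g)) =
        relComp (relPow g n) (relStar g) ∧
    (relComp
        (relComp (relComp (relPow g n) (relStar g)) (relPow g n))
        (relComp (relComp (relPow g n) (relStar g)) (relPow g n)) =
      relComp (relComp (relPow g n) (relStar g)) (relPow g n)) ∧
    (∃ a : Set (α × α), MeetClosedRel a ∧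
      relComp (relComp (relPow g n) (relStar g)) a =
        relComp (relComp (relPow g n) (relStar g)) (relPow g n)) ∧
    (∃ b : Set (α × α), MeetClosedRel b ∧
      relComp (relComp (relComp (relPow g n) (relStar g)) (relPow g n)) b =
        relComp (relPow g n) (relStar g)) ∧
    relComp (relPow g n) (relStar g) ⊆
      relComp (relComp (relPow g n) (relStar g)) (relPow g n) := by
  set G := relPow g n with hG
  set S := relStar g with hS
  set A := relComp G S with hA
  -- membership characterization of A
  have memA : ∀ x y : α, (x, y) ∈ A ↔ (x, y) ∈ G ∧ (y, y) ∈ g := by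
    intro x y
    constructor
    · rintro ⟨z, hz, h1, h2⟩
      cases h1
      exact ⟨hz, h2⟩
    · rintro ⟨h1, h2⟩
      exact ⟨y, h1, rfl, h2⟩
  have hGG : ∀ {x y z : α}, (x, y) ∈ G → (y, z) ∈ G → (x, z) ∈ G := by
    intro x y z h1 h2
    rw [← hidem]; exact ⟨y, h1, h2⟩
  have diagG : ∀ {y : α}, (y, y) ∈ g → (y, y) ∈ G := fun h => diag_mem_pow h n
  -- A is idempotent
  have hAA : relComp A A = A := by
    ext ⟨x, y⟩
    constructor
    · rintro ⟨z, hxz, hzy⟩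
      rw [memA] at hxz hzy ⊢
      exact ⟨hGG hxz.1 hzy.1, hzy.2⟩
    · intro hxy
      rw [memA] at hxy
      refine ⟨y, (memA x y).2 hxy, (memA y y).2 ⟨diagG hxy.2, hxy.2⟩⟩
  have hAG : relComp (relComp A G) (relComp A G) = relComp A G := by
    ext ⟨x, y⟩
    constructor
    · rintro ⟨m, ⟨z1, hz1, hz1m⟩, ⟨z2, hz2, hz2y⟩⟩
      rw [memA] at hz1 hz2
      refine ⟨z2, (memA x z2).2 ⟨hGG (hGG hz1.1 hz1m) hz2.1, hz2.2⟩, hz2y⟩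
    · rintro ⟨z, hxz, hzy⟩
      rw [memA] at hxz
      refine ⟨z, ⟨z, (memA x z).2 hxz, diagG hxz.2⟩,
        ⟨z, (memA z z).2 ⟨diagG hxz.2, hxz.2⟩, hzy⟩⟩
  refine ⟨hAA, hAG, ⟨G, relPow_meetClosed hg n, rfl⟩,
    ⟨S, relStar_meetClosed hg, ?_⟩, ?_⟩
  · rw [relComp_assoc, ← hA, hAA]
  · intro ⟨x, y⟩ hxy
    rw [memA] at hxy
    exact ⟨y, (memA x y).2 hxy, diagG hxy.2⟩
end

section
/- Let L be a finite lattice and g a closure operator on L². Then g·g^{ω+*} = g^{ω+*} and g*g^ω g = g*g^ω; consequently g^{ω+*}g^ω g = g^{ω+*}g^ω = g·g^{ω+*}g^ω. -/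
lemma relComp_diag_left {α : Type*} (g : Set (α × α)) :
    relComp {p : α × α | p.1 = p.2} g = g := by
  ext ⟨x, y⟩
  constructor
  · rintro ⟨z, (rfl : x = z), h⟩; exact h
  · intro h; exact ⟨x, rfl, h⟩

lemma relComp_diag_right {α : Type*} (g : Set (α × α)) :
    relComp g {p : α × α | p.1 = p.2} = g := by
  ext ⟨x, y⟩
  constructor
  · rintro ⟨z, h, (rfl : z = y)⟩; exact h
  · intro h; exact ⟨y, h, rfl⟩

lemma relPow_succ' {α : Type*} (g : Set (α × α)) (n : ℕ) :
    relPow g (n + 1) = relComp g (relPow g n) := by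
  induction n with
  | zero => exact (relComp_diag_left g).trans (relComp_diag_right g).symm
  | succ m ih =>
      calc relPow g (m + 1 + 1) = relComp (relPow g (m + 1)) g := rfl
        _ = relComp (relComp g (relPow g m)) g := by rw [ih]
        _ = relComp g (relComp (relPow g m) g) := relComp_assoc g _ g
        _ = relComp g (relPow g (m + 1)) := rfl

lemma relPow_add {α : Type*} (g : Set (α × α)) (a b : ℕ) :
    relPow g (a + b) = relComp (relPow g a) (relPow g b) := by
  induction b with
  | zero => exact (relComp_diag_right _).symm
  | succ m ih =>
      show relComp (relPow g (a + m)) g = _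
      rw [ih, relComp_assoc]
      rfl

lemma pad_right {α : Type*} {g : Set (α × α)} {x y : α} (hy : (y, y) ∈ g) :
    ∀ m j, (x, y) ∈ relPow g m → (x, y) ∈ relPow g (m + j) := by
  intro m j h
  induction j with
  | zero => exact h
  | succ k ih => exact ⟨y, ih, hy⟩

lemma pad_left {α : Type*} {g : Set (α × α)} {x y : α} (hx : (x, x) ∈ g) :
    ∀ m j, (x, y) ∈ relPow g m → (x, y) ∈ relPow g (j + m) := by
  intro m j h
  induction j with
  | zero => simpa using h
  | succ k ih =>
      have : (k + m) + 1 = k + 1 + m := by omega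
      rw [← this, relPow_succ']
      exact ⟨x, hx, ih⟩

/-- Let `L` be a finite lattice and `g` a closure operator on `L²` (given by its
meet-closed relation), with `g^ω = g^n` the idempotent power and
`g^{ω+*} = g^ω g*`.  Then `g · g^{ω+*} = g^{ω+*}` and `g* g^ω g = g* g^ω`;
consequently `g^{ω+*} g^ω g = g^{ω+*} g^ω = g · g^{ω+*} g^ω`. -/
theorem omega_star_absorption (α : Type*) [CompleteLattice α] [Fintype α]
    (g : Set (α × α)) (hg : MeetClosedRel g)
    (n : ℕ) (hn : 0 < n) (hidem : relComp (relPow g n) (relPow g n) = relPow g n) :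
    relComp g (relComp (relPow g n) (relStar g)) = relComp (relPow g n) (relStar g) ∧
    relComp (relComp (relStar g) (relPow g n)) g = relComp (relStar g) (relPow g n) ∧
    relComp (relComp (relComp (relPow g n) (relStar g)) (relPow g n)) g =
      relComp (relComp (relPow g n) (relStar g)) (relPow g n) ∧
    relComp g (relComp (relComp (relPow g n) (relStar g)) (relPow g n)) =
      relComp (relComp (relPow g n) (relStar g)) (relPow g n) := by
  have pow_collapse : ∀ x y : α, (x, y) ∈ relPow g (n + n) → (x, y) ∈ relPow g n := by
    intro x y h
    rw [relPow_add, hidem] at h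
    exact h
  have h1 : relComp g (relComp (relPow g n) (relStar g)) =
      relComp (relPow g n) (relStar g) := by
    ext ⟨x, y⟩
    constructor
    · rintro ⟨w, hxw, z, hwz, (rfl : z = y), hy⟩
      have hxy1 : (x, z) ∈ relPow g (n + 1) := by
        rw [relPow_succ']; exact ⟨w, hxw, hwz⟩
      have hxy2 : (x, z) ∈ relPow g ((n + 1) + (n - 1)) := pad_right hy _ _ hxy1
      have heq : (n + 1) + (n - 1) = n + n := by omega
      rw [heq] at hxy2
      exact ⟨z, pow_collapse _ _ hxy2, rfl, hy⟩
    · rintro ⟨z, hxz, (rfl : z = y), hy⟩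
      have hxy1 : (x, z) ∈ relPow g (n + 1) := ⟨z, hxz, hy⟩
      rw [relPow_succ'] at hxy1
      obtain ⟨w, hxw, hwy⟩ := hxy1
      exact ⟨w, hxw, z, hwy, rfl, hy⟩
  have h2 : relComp (relComp (relStar g) (relPow g n)) g =
      relComp (relStar g) (relPow g n) := by
    ext ⟨x, y⟩
    constructor
    · rintro ⟨z, ⟨w, ⟨(rfl : x = w), hx⟩, hwz⟩, hzy⟩
      have hxy1 : (x, y) ∈ relPow g (n + 1) := ⟨z, hwz, hzy⟩
      have hxy2 : (x, y) ∈ relPow g ((n - 1) + (n + 1)) := pad_left hx _ _ hxy1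
      have heq : (n - 1) + (n + 1) = n + n := by omega
      rw [heq] at hxy2
      exact ⟨x, ⟨rfl, hx⟩, pow_collapse _ _ hxy2⟩
    · rintro ⟨w, ⟨(rfl : x = w), hx⟩, hxy⟩
      have heq : n = (n - 1) + 1 := by omega
      rw [heq] at hxy
      obtain ⟨z, hxz, hzy⟩ := hxy
      have hxz' : (x, z) ∈ relPow g (1 + (n - 1)) := pad_left hx _ _ hxz
      have heq2 : 1 + (n - 1) = n := by omega
      rw [heq2] at hxz'
      exact ⟨z, ⟨x, ⟨rfl, hx⟩, hxz'⟩, hzy⟩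
  refine ⟨h1, h2, ?_, ?_⟩
  · rw [relComp_assoc (relPow g n) (relStar g) (relPow g n),
      relComp_assoc (relPow g n) (relComp (relStar g) (relPow g n)) g, h2,
      ← relComp_assoc]
  · rw [← relComp_assoc, ← relComp_assoc, relComp_assoc g (relPow g n) (relStar g), h1]
end

section
/- Let 𝒜 = (Q, δ) be an L-automaton and q ≠ q' ∈ Q. The sampling operator 𝒜(q,q'), defined by labelling q with ℓ, q' with ℓ', all other states with the bottom B, taking the least flow above this labelling, and reading off the values at q and q', is a closure operator on L²; moreover (ℓ, ℓ') is stable for 𝒜(q,q') if and only if there exists a flow F on 𝒜 with qF = ℓ and q'F = ℓ'. -/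
/-- An `L`-flow on an `L`-automaton: the labels of the endpoints of every edge
form a stable pair for the closure operator labelling that edge. -/
def IsFlow {α Q E : Type*} [CompleteLattice α]
    (src tgt : E → Q) (lab : E → ClosureOperator (α × α)) (F : Q → α) : Prop :=
  ∀ e : E, lab e (F (src e), F (tgt e)) = (F (src e), F (tgt e))

/-- The least flow above a labelling `f : Q → L` (flows being meet-closed in `L^Q`). -/
noncomputable def minFlow {α Q E : Type*} [CompleteLattice α]
    (src tgt : E → Q) (lab : E → ClosureOperator (α × α)) (f : Q → α) : Q → α :=
  sInf {F | IsFlow src tgt lab F ∧ f ≤ F}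

open Classical in
/-- The labelling of `Q` putting `ℓ` at `q`, `ℓ'` at `q'` and the bottom `⊥`
everywhere else. -/
noncomputable def pointLabel {α Q : Type*} [CompleteLattice α]
    (q q' : Q) (ℓ ℓ' : α) : Q → α :=
  fun p => if p = q then ℓ else if p = q' then ℓ' else ⊥

/-- The sampling operation `𝒜(q, q')`: label `q` with `ℓ`, `q'` with `ℓ'`, all
other states with `⊥`, take the least flow above this labelling, and read off
the values at `q` and `q'`. -/
noncomputable def sample {α Q E : Type*} [CompleteLattice α]
    (src tgt : E → Q) (lab : E → ClosureOperator (α × α)) (q q' : Q)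
    (p : α × α) : α × α :=
  (minFlow src tgt lab (pointLabel q q' p.1 p.2) q,
   minFlow src tgt lab (pointLabel q q' p.1 p.2) q')

section Aux

variable {α Q E : Type*} [CompleteLattice α]
    (src tgt : E → Q) (lab : E → ClosureOperator (α × α))

lemma le_minFlow (f : Q → α) : f ≤ minFlow src tgt lab f :=
  le_sInf fun _ hF => hF.2

lemma minFlow_le {f F : Q → α} (hF : IsFlow src tgt lab F) (hfF : f ≤ F) :
    minFlow src tgt lab f ≤ F :=
  sInf_le ⟨hF, hfF⟩

lemma isFlow_minFlow (f : Q → α) : IsFlow src tgt lab (minFlow src tgt lab f) := by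
  intro e
  set M := minFlow src tgt lab f with hM
  refine le_antisymm ?_ ((lab e).le_closure _)
  have key : ∀ F ∈ {F | IsFlow src tgt lab F ∧ f ≤ F},
      lab e (M (src e), M (tgt e)) ≤ (F (src e), F (tgt e)) := by
    intro F hF
    have hle : M ≤ F := sInf_le hF
    calc lab e (M (src e), M (tgt e))
        ≤ lab e (F (src e), F (tgt e)) :=
          (lab e).monotone ⟨hle (src e), hle (tgt e)⟩
      _ = (F (src e), F (tgt e)) := hF.1 e
  have hfst : (lab e (M (src e), M (tgt e))).1 ≤ M (src e) := by
    rw [hM, minFlow]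
    rw [sInf_apply]
    exact le_iInf fun ⟨F, hF⟩ => (key F hF).1
  have hsnd : (lab e (M (src e), M (tgt e))).2 ≤ M (tgt e) := by
    rw [hM, minFlow]
    rw [sInf_apply]
    exact le_iInf fun ⟨F, hF⟩ => (key F hF).2
  exact ⟨hfst, hsnd⟩

lemma pointLabel_le_iff {q q' : Q} (hqq' : q ≠ q') {ℓ ℓ' : α} {F : Q → α} :
    pointLabel q q' ℓ ℓ' ≤ F ↔ ℓ ≤ F q ∧ ℓ' ≤ F q' := by
  classical
  constructor
  · intro h
    refine ⟨?_, ?_⟩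
    · have := h q; simpa [pointLabel] using this
    · have := h q'; simpa [pointLabel, hqq'.symm] using this
  · rintro ⟨h1, h2⟩ p
    by_cases hp : p = q
    · subst hp; simpa [pointLabel] using h1
    · by_cases hp' : p = q'
      · subst hp'; simpa [pointLabel, hp] using h2
      · simp [pointLabel, hp, hp']

end Aux

/-- Sampling an `L`-automaton at two distinct states `q ≠ q'` yields a closure
operator on `L²`; moreover `(ℓ, ℓ')` is stable for `𝒜(q, q')` if and only if
there is a flow `F` on `𝒜` with `F q = ℓ` and `F q' = ℓ'`. -/
theorem sample_closureOperator (α Q E : Type*) [CompleteLattice α]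
    [Fintype Q] [Fintype E]
    (src tgt : E → Q) (lab : E → ClosureOperator (α × α))
    (q q' : Q) (hqq' : q ≠ q') :
    ∃ c : ClosureOperator (α × α),
      (∀ p : α × α, c p = sample src tgt lab q q' p) ∧
      (∀ ℓ ℓ' : α, c (ℓ, ℓ') = (ℓ, ℓ') ↔
        ∃ F : Q → α, IsFlow src tgt lab F ∧ F q = ℓ ∧ F q' = ℓ') := by
  classical
  -- extensivity
  have hext : ∀ p : α × α, p ≤ sample src tgt lab q q' p := by
    intro p
    have h := (pointLabel_le_iff hqq'
        (ℓ := p.1) (ℓ' := p.2)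
        (F := minFlow src tgt lab (pointLabel q q' p.1 p.2))).1
      (le_minFlow src tgt lab _)
    exact ⟨h.1, h.2⟩
  -- characterization of sample below a flow value pair
  have hle_of_flow : ∀ (p : α × α) (F : Q → α), IsFlow src tgt lab F →
      p.1 ≤ F q → p.2 ≤ F q' → sample src tgt lab q q' p ≤ (F q, F q') := by
    intro p F hF h1 h2
    have hpl : pointLabel q q' p.1 p.2 ≤ F :=
      (pointLabel_le_iff hqq').2 ⟨h1, h2⟩
    have := minFlow_le src tgt lab hF hpl
    exact ⟨this q, this q'⟩
  -- monotone
  have hmono : Monotone (sample src tgt lab q q') := by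
    intro p p' hpp'
    have hF := isFlow_minFlow src tgt lab (pointLabel q q' p'.1 p'.2)
    have h' := hext p'
    exact hle_of_flow p _ hF (le_trans hpp'.1 h'.1) (le_trans hpp'.2 h'.2)
  -- idempotent
  have hidem : ∀ p : α × α,
      sample src tgt lab q q' (sample src tgt lab q q' p) ≤
        sample src tgt lab q q' p := by
    intro p
    exact hle_of_flow _ _ (isFlow_minFlow src tgt lab (pointLabel q q' p.1 p.2))
      le_rfl le_rfl
  refine ⟨ClosureOperator.mk' (sample src tgt lab q q') hmono hext hidem, fun p => rfl, ?_⟩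
  intro ℓ ℓ'
  constructor
  · intro h
    refine ⟨minFlow src tgt lab (pointLabel q q' ℓ ℓ'),
      isFlow_minFlow src tgt lab _, ?_, ?_⟩
    · exact congrArg Prod.fst h
    · exact congrArg Prod.snd h
  · rintro ⟨F, hF, hq, hq'⟩
    have h1 : sample src tgt lab q q' (ℓ, ℓ') ≤ (ℓ, ℓ') := by
      have := hle_of_flow (ℓ, ℓ') F hF (by simp [hq]) (by simp [hq'])
      simpa [hq, hq'] using this
    exact le_antisymm h1 (hext (ℓ, ℓ'))
end

section
/- Let f₁, …, fₙ be closure operators on L² and let 𝒜 be the L-automaton which is a path q₀ →^{f₁} q₁ →^{f₂} ⋯ →^{fₙ} qₙ. Then sampling 𝒜 at (q₀, qₙ) yields the product f₁f₂⋯fₙ. -/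
/-- The composed relation of a finite family of relations (the empty
composition being the diagonal, i.e. the identity of the monoid). -/
def relCompFam {α : Type*} : (n : ℕ) → (Fin n → Set (α × α)) → Set (α × α)
  | 0, _ => {p | p.1 = p.2}
  | n + 1, r => relComp (relCompFam n (fun i => r i.castSucc)) (r (Fin.last n))

/-- Flows on the path automaton `q₀ →^{f₁} q₁ →^{f₂} ⋯ →^{fₙ} qₙ`. -/
def IsPathFlow {α : Type*} [CompleteLattice α] (n : ℕ)
    (f : Fin n → ClosureOperator (α × α)) (F : Fin (n + 1) → α) : Prop :=
  ∀ i : Fin n, f i (F i.castSucc, F i.succ) = (F i.castSucc, F i.succ)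

/-- The least flow on the path automaton above a labelling. -/
noncomputable def minPathFlow {α : Type*} [CompleteLattice α] (n : ℕ)
    (f : Fin n → ClosureOperator (α × α)) (g : Fin (n + 1) → α) : Fin (n + 1) → α :=
  sInf {F | IsPathFlow n f F ∧ g ≤ F}

open Classical in
/-- Sampling the path automaton at its first and last states. -/
noncomputable def pathSample {α : Type*} [CompleteLattice α] (n : ℕ)
    (f : Fin n → ClosureOperator (α × α)) (p : α × α) : α × α :=
  (minPathFlow n f (fun q => if q = 0 then p.1 else if q = Fin.last n then p.2 else ⊥) 0,
   minPathFlow n f (fun q => if q = 0 then p.1 else if q = Fin.last n then p.2 else ⊥)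
     (Fin.last n))

section Aux
variable {α : Type*} [CompleteLattice α]

lemma closure_iInf_fixed (c : ClosureOperator α) {ι : Sort*} (x : ι → α)
    (hx : ∀ i, c (x i) = x i) : c (⨅ i, x i) = ⨅ i, x i := by
  refine le_antisymm (le_iInf fun i => ?_) (c.le_closure _)
  calc c (⨅ i, x i) ≤ c (x i) := c.monotone (iInf_le _ i)
  _ = x i := hx i

lemma minPathFlow_spec (n : ℕ) (f : Fin n → ClosureOperator (α × α))
    (g : Fin (n + 1) → α) :
    IsPathFlow n f (minPathFlow n f g) ∧ g ≤ minPathFlow n f g := by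
  set S : Set (Fin (n+1) → α) := {F | IsPathFlow n f F ∧ g ≤ F} with hS
  constructor
  · intro i
    have hp : (minPathFlow n f g i.castSucc, minPathFlow n f g i.succ)
        = ⨅ F : S, ((F : Fin (n+1) → α) i.castSucc, (F : Fin (n+1) → α) i.succ) := by
      apply Prod.ext
      · simp only [minPathFlow, Prod.fst_iInf, sInf_apply, hS]; rfl
      · simp only [minPathFlow, Prod.snd_iInf, sInf_apply, hS]; rfl
    rw [hp]
    exact closure_iInf_fixed (f i) _ (fun F => F.2.1 i)
  · exact le_sInf fun F hF => hF.2

lemma relCompFam_iff_chain (n : ℕ) (r : Fin n → Set (α × α)) (p : α × α) :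
    p ∈ relCompFam n r ↔ ∃ z : Fin (n + 1) → α, z 0 = p.1 ∧ z (Fin.last n) = p.2 ∧
      ∀ i : Fin n, (z i.castSucc, z i.succ) ∈ r i := by
  induction n generalizing p with
  | zero =>
    simp only [relCompFam, Set.mem_setOf_eq]
    constructor
    · intro h
      exact ⟨fun _ => p.1, rfl, h, fun i => i.elim0⟩
    · rintro ⟨z, h0, hl, -⟩
      rw [← h0, ← hl]
      rfl
  | succ n ih =>
    constructor
    · rintro ⟨w, hw1, hw2⟩
      obtain ⟨z, h0, hl, hc⟩ := (ih _ (p.1, w)).mp hw1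
      refine ⟨Fin.snoc z p.2, ?_, ?_, ?_⟩
      · have : (0 : Fin (n+2)) = (0 : Fin (n+1)).castSucc := rfl
        rw [this, Fin.snoc_castSucc]; exact h0
      · simp [Fin.snoc_last]
      · intro i
        induction i using Fin.lastCases with
        | last =>
          rw [Fin.succ_last, Fin.snoc_last, Fin.snoc_castSucc, hl]
          exact hw2
        | cast j =>
          rw [Fin.succ_castSucc, Fin.snoc_castSucc, Fin.snoc_castSucc]
          exact hc j
    · rintro ⟨z, h0, hl, hc⟩
      refine ⟨z (Fin.last n).castSucc, (ih _ (p.1, z (Fin.last n).castSucc)).mpr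
        ⟨fun i => z i.castSucc, ?_, rfl, ?_⟩, ?_⟩
      · exact h0
      · intro i
        have := hc i.castSucc
        rw [Fin.succ_castSucc] at this
        exact this
      · have := hc (Fin.last n)
        rw [Fin.succ_last, hl] at this
        exact this

end Aux

/-- Let `f₁, …, fₙ` be closure operators on `L²` and `𝒜` the path automaton
`q₀ →^{f₁} q₁ →^{f₂} ⋯ →^{fₙ} qₙ`.  Then sampling `𝒜` at `(q₀, qₙ)` yields the
product `f₁ f₂ ⋯ fₙ`: the stable pairs of the sampling operator are exactly the
relational composition of the stable-pair relations of the `fᵢ`. -/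
theorem pathSample_eq_product (α : Type*) [CompleteLattice α]
    (n : ℕ) (hn : 0 < n) (f : Fin n → ClosureOperator (α × α)) :
    {p : α × α | pathSample n f p = p} = relCompFam n (fun i => fixSet (f i)) := by
  ext p
  simp only [Set.mem_setOf_eq]
  rw [relCompFam_iff_chain]
  set g : Fin (n+1) → α :=
    (fun q => if q = 0 then p.1 else if q = Fin.last n then p.2 else ⊥) with hg
  have hlast0 : (Fin.last n : Fin (n+1)) ≠ 0 := by
    intro h; have := congrArg Fin.val h; simp [Fin.val_last] at this; omega
  have hg0 : g 0 = p.1 := by simp [hg]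
  have hgl : g (Fin.last n) = p.2 := by simp [hg, hlast0]
  obtain ⟨hflow, hge⟩ := minPathFlow_spec n f g
  constructor
  · intro hfix
    have h0 : minPathFlow n f g 0 = p.1 := congrArg Prod.fst hfix
    have hl : minPathFlow n f g (Fin.last n) = p.2 := congrArg Prod.snd hfix
    exact ⟨minPathFlow n f g, h0, hl, fun i => hflow i⟩
  · rintro ⟨z, h0, hl, hc⟩
    have hz : z ∈ {F | IsPathFlow n f F ∧ g ≤ F} := by
      refine ⟨hc, fun q => ?_⟩
      by_cases hq0 : q = 0
      · subst hq0; rw [hg0, ← h0]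
      · by_cases hql : q = Fin.last n
        · subst hql; rw [hgl, ← hl]
        · simp [hg, hq0, hql]
    have hle : minPathFlow n f g ≤ z := sInf_le hz
    have e0 : minPathFlow n f g 0 = p.1 :=
      le_antisymm (h0 ▸ hle 0) (hg0 ▸ hge 0)
    have el : minPathFlow n f g (Fin.last n) = p.2 :=
      le_antisymm (hl ▸ hle (Fin.last n)) (hgl ▸ hge (Fin.last n))
    exact Prod.ext e0 el
end

section
/- Let M be a finite X-generated monoid acting by partial transformations on a set R (faithfully on the right), and for x ∈ X define a relation on the set-partition lattice SP(R) by (U,P) → (Y,Q) iff Ux ⊆ Y and right multiplication by x induces a well-defined partially-defined injective map U/P → Y/Q. Then this relation is meet-closed in SP(R)² (i.e., it defines an abstract flow): it contains the pair of tops, and if (U₁,P₁) → (Y₁,Q₁) and (U₂,P₂) → (Y₂,Q₂) then (U₁∩U₂, P₁∧P₂) → (Y₁∩Y₂, Q₁∧Q₂). -/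
/-- An element of the set-partition lattice `SP(R)`: a pair `(Y, P)` of a subset
`Y ⊆ R` with a partition `P` of `Y`, encoded as a partial equivalence relation
on `R`; `Y = {a | rel a a}`. -/
structure SP (R : Type*) where
  rel : R → R → Prop
  symm : ∀ {a b}, rel a b → rel b a
  trans : ∀ {a b c}, rel a b → rel b c → rel a c

/-- The meet `(U₁ ∩ U₂, P₁ ∧ P₂)` in the set-partition lattice. -/
def SP.meet {R : Type*} (p q : SP R) : SP R where
  rel a b := p.rel a b ∧ q.rel a b
  symm h := ⟨p.symm h.1, q.symm h.2⟩
  trans h h' := ⟨p.trans h.1 h'.1, q.trans h.2 h'.2⟩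

/-- The top `(R, {R})` of the set-partition lattice. -/
def SP.topSP {R : Type*} : SP R where
  rel _ _ := True
  symm _ := trivial
  trans _ _ := trivial

/-- For a generator `x` acting on `R` by the partial transformation `f`
(`f a = some b` meaning `a · x = b`), the free-flow relation on `SP(R)`:
`(U, P) → (Y, Q)` iff `U x ⊆ Y` and right multiplication by `x` induces a
well-defined partially-defined injective map `U/P → Y/Q`, i.e. for `m, n ∈ U`
with `m x, n x` defined (hence in `Y`), `m P n ↔ (m x) Q (n x)`. -/
def SPFlow {R : Type*} (f : R → Option R) (p q : SP R) : Prop :=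
  (∀ a b, p.rel a a → f a = some b → q.rel b b) ∧
  (∀ m n m' n', p.rel m m → p.rel n n → f m = some m' → f n = some n' →
    (p.rel m n ↔ q.rel m' n'))

/-- Let `M` be a finite `X`-generated monoid acting by partial transformations
on `R`, and let `x ∈ X` act by the partial function `f`.  The free-flow relation
on the set-partition lattice `SP(R)` determined by `x` is meet-closed in
`SP(R)²`, i.e. it defines an abstract flow: it contains the pair of tops, and if
`(U₁, P₁) → (Y₁, Q₁)` and `(U₂, P₂) → (Y₂, Q₂)` then
`(U₁ ∩ U₂, P₁ ∧ P₂) → (Y₁ ∩ Y₂, Q₁ ∧ Q₂)`. -/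
theorem SPFlow_meetClosed (R : Type*) [Fintype R] (f : R → Option R) :
    SPFlow f SP.topSP SP.topSP ∧
    (∀ p₁ q₁ p₂ q₂ : SP R, SPFlow f p₁ q₁ → SPFlow f p₂ q₂ →
      SPFlow f (SP.meet p₁ p₂) (SP.meet q₁ q₂)) := by
  constructor
  · exact ⟨fun _ _ _ _ => trivial, fun _ _ _ _ _ _ _ _ => Iff.rfl⟩
  · rintro p₁ q₁ p₂ q₂ ⟨h1a, h1b⟩ ⟨h2a, h2b⟩
    refine ⟨fun a b ha hf => ⟨h1a a b ha.1 hf, h2a a b ha.2 hf⟩, ?_⟩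
    intro m n m' n' hm hn hfm hfn
    constructor
    · rintro ⟨h1, h2⟩
      exact ⟨(h1b m n m' n' hm.1 hn.1 hfm hfn).mp h1,
             (h2b m n m' n' hm.2 hn.2 hfm hfn).mp h2⟩
    · rintro ⟨h1, h2⟩
      exact ⟨(h1b m n m' n' hm.1 hn.1 hfm hfn).mpr h1,
             (h2b m n m' n' hm.2 hn.2 hfm hfn).mpr h2⟩
end

section
/- Let S be a finite monoid, s ∈ S, and V a pseudovariety of finite monoids. Then s is V-aperiodic if and only if s is (A ⓜ V)-aperiodic, where A is the pseudovariety of aperiodic monoids and ⓜ denotes Mal'cev product. -/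
/-- A relational morphism `φ : S → T` of monoids: a fully-defined relation
whose graph is a submonoid of `S × T`. -/
structure RelMorph (S T : Type) [Monoid S] [Monoid T] where
  rel : S → Set T
  nonempty : ∀ s, (rel s).Nonempty
  one_mem : (1 : T) ∈ rel 1
  mul_mem : ∀ s s' t t', t ∈ rel s → t' ∈ rel s' → t * t' ∈ rel (s * s')

/-- An element `t` of a finite monoid is aperiodic if `t^ω = t^{ω+1}`,
equivalently some positive power of `t` equals the next power. -/
def IsAperiodicElem {T : Type} [Monoid T] (t : T) : Prop :=
  ∃ n : ℕ, t ^ (n + 1) = t ^ (n + 2)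

/-- An element `s` of a finite monoid `S` is `V`-aperiodic if for every
relational morphism `φ : S → T` with `T ∈ V` there is an aperiodic `t ∈ s φ`. -/
def IsVAperiodic (V : ∀ (T : Type) [Monoid T] [Fintype T], Prop)
    (S : Type) [Monoid S] [Fintype S] (s : S) : Prop :=
  ∀ (T : Type) (_ : Monoid T) (_ : Fintype T), V T →
    ∀ φ : RelMorph S T, ∃ t ∈ φ.rel s, IsAperiodicElem t

/-- Membership in the Mal'cev product `A ⓜ V`, where `A` is the pseudovariety of
aperiodic monoids: `T ∈ A ⓜ V` iff there is a relational morphism `ψ : T → U`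
with `U ∈ V` such that for every idempotent `e ∈ U` the preimage `e ψ⁻¹` is
aperiodic (all its elements are aperiodic). -/
def InMalcevAperiodic (V : ∀ (T : Type) [Monoid T] [Fintype T], Prop)
    (T : Type) [Monoid T] [Fintype T] : Prop :=
  ∃ (U : Type) (_ : Monoid U) (_ : Fintype U), V U ∧
    ∃ ψ : RelMorph T U, ∀ e : U, e * e = e → ∀ t : T, e ∈ ψ.rel t → IsAperiodicElem t

-- Auxiliary lemmas

lemma RelMorph.pow_mem {S T : Type} [Monoid S] [Monoid T] (φ : RelMorph S T)
    {s : S} {t : T} (h : t ∈ φ.rel s) : ∀ k, t ^ k ∈ φ.rel (s ^ k)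
  | 0 => by simpa using φ.one_mem
  | k + 1 => by
      rw [pow_succ, pow_succ]
      exact φ.mul_mem _ _ _ _ (φ.pow_mem h k) h

lemma pow_stab {T : Type} [Monoid T] {t : T} {n : ℕ} (h : t ^ (n + 1) = t ^ (n + 2)) :
    ∀ k, t ^ (n + 1 + k) = t ^ (n + 1)
  | 0 => rfl
  | k + 1 => by
      rw [show n + 1 + (k + 1) = (n + 1 + k) + 1 by omega, pow_succ, pow_stab h k,
        ← pow_succ]
      exact h.symm

lemma exists_good_M {T : Type} [Monoid T] [Fintype T] (t : T) :
    ∃ M, 1 ≤ M ∧ ∀ a, M ≤ a → t ^ (a + M) = t ^ a := by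
  obtain ⟨i, j, hij, hpow⟩ : ∃ i j : ℕ, i < j ∧ t ^ i = t ^ j := by
    obtain ⟨i, j, hne, h⟩ := Finite.exists_ne_map_eq_of_infinite (fun n : ℕ => t ^ n)
    rcases lt_or_gt_of_ne hne with h' | h'
    · exact ⟨i, j, h', h⟩
    · exact ⟨j, i, h', h.symm⟩
  set p := j - i with hp
  have hp1 : 1 ≤ p := by omega
  have hper : ∀ a, i ≤ a → t ^ (a + p) = t ^ a := by
    intro a ha
    obtain ⟨b, rfl⟩ := Nat.exists_eq_add_of_le ha
    have : t ^ (i + p) = t ^ i := by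
      rw [show i + p = j by omega]; exact hpow.symm
    calc t ^ (i + b + p) = t ^ (i + p) * t ^ b := by rw [← pow_add]; ring_nf
      _ = t ^ i * t ^ b := by rw [this]
      _ = t ^ (i + b) := by rw [← pow_add]
  have hiter : ∀ k a, i ≤ a → t ^ (a + k * p) = t ^ a := by
    intro k
    induction k with
    | zero => simp
    | succ k ih =>
        intro a ha
        rw [show a + (k + 1) * p = (a + k * p) + p by ring, hper _ (by omega), ih a ha]
  refine ⟨(i + 1) * p, ?_, ?_⟩
  · have := Nat.mul_le_mul_left (i + 1) hp1
    omega
  · intro a ha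
    have h1 : i + 1 ≤ (i + 1) * p := by
      have := Nat.mul_le_mul_left (i + 1) hp1
      omega
    exact hiter (i + 1) a (by omega)

lemma aperiodic_of_pow {T : Type} [Monoid T] {t : T} {M : ℕ} (hM : 1 ≤ M)
    (hper : ∀ a, M ≤ a → t ^ (a + M) = t ^ a)
    (h : IsAperiodicElem (t ^ (M + 1))) : IsAperiodicElem t := by
  obtain ⟨j, hj⟩ := h
  rw [← pow_mul, ← pow_mul] at hj
  set A := (M + 1) * (j + 1) with hA
  have hA1 : M + 1 ≤ A := Nat.le_mul_of_pos_right (M + 1) (Nat.succ_pos j)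
  have hj' : t ^ A = t ^ (A + (M + 1)) := by
    rw [show A + (M + 1) = (M + 1) * (j + 2) by rw [hA]; ring]
    exact hj
  refine ⟨A + M - 1, ?_⟩
  rw [show A + M - 1 + 1 = A + M by omega, show A + M - 1 + 2 = A + M + 1 by omega]
  calc t ^ (A + M) = t ^ A := hper A (Nat.le_of_succ_le hA1)
    _ = t ^ (A + (M + 1)) := hj'
    _ = t ^ (A + M + 1) := by ring_nf

/-- Let `S` be a finite monoid, `s ∈ S`, and `V` a pseudovariety of finite
monoids (closed under finite direct products and division).  Then `s` is
`V`-aperiodic if and only if `s` is `(A ⓜ V)`-aperiodic. -/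
theorem vAperiodic_iff_malcevAperiodic
    (V : ∀ (T : Type) [Monoid T] [Fintype T], Prop)
    (hProd : ∀ (T₁ T₂ : Type) (_ : Monoid T₁) (_ : Fintype T₁)
      (_ : Monoid T₂) (_ : Fintype T₂), V T₁ → V T₂ → V (T₁ × T₂))
    (hDiv : ∀ (T N : Type) (_ : Monoid T) (_ : Fintype T) (_ : Monoid N)
      (_ : Fintype N), V T →
      (∃ (P : Submonoid T) (h : P →* N), Function.Surjective h) → V N)
    (S : Type) [Monoid S] [Fintype S] (s : S) :
    IsVAperiodic V S s ↔ IsVAperiodic (fun T _ _ => InMalcevAperiodic V T) S s := by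
  constructor
  · -- hard direction: V-aperiodic → (A ⓜ V)-aperiodic
    intro hs T _ _ hT φ
    obtain ⟨U, _, _, hU, ψ, hψ⟩ := hT
    -- compose φ with ψ
    let θ : RelMorph S U :=
      { rel := fun s' => {u | ∃ t ∈ φ.rel s', u ∈ ψ.rel t}
        nonempty := fun s' => by
          obtain ⟨t, ht⟩ := φ.nonempty s'
          obtain ⟨u, hu⟩ := ψ.nonempty t
          exact ⟨u, t, ht, hu⟩
        one_mem := ⟨1, φ.one_mem, ψ.one_mem⟩
        mul_mem := by
          rintro s1 s2 u1 u2 ⟨t1, ht1, hu1⟩ ⟨t2, ht2, hu2⟩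
          exact ⟨t1 * t2, φ.mul_mem _ _ _ _ ht1 ht2, ψ.mul_mem _ _ _ _ hu1 hu2⟩ }
    obtain ⟨u, hu, n, hn⟩ := hs U _ _ hU θ
    obtain ⟨t, htφ, huψ⟩ := hu
    obtain ⟨M, hM, hper⟩ := exists_good_M t
    -- powers of t stabilize at multiples of M
    have hmul : ∀ c, 1 ≤ c → t ^ (c * M) = t ^ M := by
      intro c hc
      induction c with
      | zero => omega
      | succ c ih =>
          rcases Nat.eq_or_lt_of_le hc with h1 | h1
          · rw [← h1, one_mul]
          · have hc1 : 1 ≤ c := by omega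
            have : M ≤ c * M := Nat.le_mul_of_pos_left M hc1
            rw [show (c + 1) * M = c * M + M by ring, hper _ this, ih hc1]
    have hstab := pow_stab hn
    -- the idempotent e = u ^ (n + 1)
    have hidem : u ^ (n + 1) * u ^ (n + 1) = u ^ (n + 1) := by
      rw [← pow_add]; exact hstab (n + 1)
    have hn1 : n + 1 ≤ (n + 1) * M := Nat.le_mul_of_pos_right (n + 1) hM
    obtain ⟨k, hk⟩ := Nat.exists_eq_add_of_le hn1
    have hkey : u ^ ((n + 1) * M + 1) = u ^ (n + 1) := by
      rw [hk, show n + 1 + k + 1 = n + 1 + (k + 1) by omega]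
      exact hstab (k + 1)
    have htM : t ^ ((n + 1) * M + 1) = t ^ (M + 1) := by
      rw [pow_succ, pow_succ, hmul (n + 1) (by omega)]
    have hmem : u ^ (n + 1) ∈ ψ.rel (t ^ (M + 1)) := by
      rw [← hkey, ← htM]
      exact ψ.pow_mem huψ _
    exact ⟨t, htφ, aperiodic_of_pow hM hper (hψ _ hidem _ hmem)⟩
  · -- easy direction: (A ⓜ V)-aperiodic → V-aperiodic
    intro hs T mT fT hT φ
    refine hs T mT fT ⟨T, mT, fT, hT,
      ⟨{ rel := fun t => {t}
         nonempty := fun t => ⟨t, rfl⟩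
         one_mem := rfl
         mul_mem := by rintro _ _ _ _ rfl rfl; rfl }, ?_⟩⟩ φ
    intro e he t ht
    have : e = t := ht
    subst this
    exact ⟨0, by simpa [pow_succ] using he.symm⟩
end
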